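/- (B_n sequence.) Let n ≥ 4 be an integer, d = n+1, and a = √(8/n). On ℝ^{d+1} = ℝ^{n+1} × ℝ (one dilaton φ) consider the n+2 wall forms, indexed by −1, 0, 1, …, n: w_{−1} = e_{n+1} − e_n, w₀ = e_n − e_{n−1}, w₁ = e₁ + … + e_{n−2} − (a√2/2)φ, w_j = e_{n−j+1} − e_{n−j} for 2 ≤ j ≤ n−1, and w_n = e₁ + (a√2/4)φ. Then (w_i|w_i) = 2 for i = −1, 0, 1, …, n−1 and (w_n|w_n) = 1, and the Cartan matrix A_{ij} = 2(w_i|w_j)/(w_i|w_i) has entries: A_{ii} = 2; A_{−1,0} = A_{0,−1} = −1; A_{0,2} = A_{2,0} = −1; A_{1,2} = A_{2,1} = −1; A_{j,j+1} = A_{j+1,j} = −1 for 2 ≤ j ≤ n−2; A_{n−1,n} = −1 and A_{n,n−1} = −2; all other entries 0. This is the generalized Cartan matrix of the overextension B_n^∧∧. -/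

import Mathlib

/-- The wall scalar product on `ℝ^{n+1} × ℝ` (`d = n+1` scale factors, one dilaton):
`(w|w') = Σᵢ wᵢw'ᵢ − (1/n)(Σᵢ wᵢ)(Σᵢ w'ᵢ) + w̃ w̃'`. -/
noncomputable def wallIPB (n : ℕ) (w w' : (Fin (n + 1) → ℝ) × ℝ) : ℝ :=
  (∑ i, w.1 i * w'.1 i) - (1 / (n : ℝ)) * (∑ i, w.1 i) * (∑ i, w'.1 i) + w.2 * w'.2

lemma sum_ind_mul {n : ℕ} (f : ℕ → ℝ) (p : ℕ) (hp : p ≤ n) :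
    ∑ l : Fin (n+1), (if l.val = p then (1:ℝ) else 0) * f l.val = f p := by
  rw [Fin.sum_univ_eq_sum_range (fun k => (if k = p then (1:ℝ) else 0) * f k)]
  simp_rw [ite_mul, one_mul, zero_mul]
  rw [Finset.sum_ite_eq' (Finset.range (n+1)) p f, if_pos (by simp [Finset.mem_range]; omega)]

lemma sum_sub_ind_mul {n : ℕ} (f : ℕ → ℝ) (p q : ℕ) (hp : p ≤ n) (hq : q ≤ n) :
    ∑ l : Fin (n+1), ((if l.val = p then (1:ℝ) else 0) - (if l.val = q then 1 else 0)) * f l.val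
      = f p - f q := by
  simp_rw [sub_mul]
  rw [Finset.sum_sub_distrib, sum_ind_mul f p hp, sum_ind_mul f q hq]

lemma sum_ind {n : ℕ} (p : ℕ) (hp : p ≤ n) :
    ∑ l : Fin (n+1), (if l.val = p then (1:ℝ) else 0) = 1 := by
  simpa using sum_ind_mul (n:=n) (fun _ => (1:ℝ)) p hp

lemma sum_sub_ind {n : ℕ} (p q : ℕ) (hp : p ≤ n) (hq : q ≤ n) :
    ∑ l : Fin (n+1), ((if l.val = p then (1:ℝ) else 0) - (if l.val = q then 1 else 0)) = 0 := by
  have h := sum_sub_ind_mul (n:=n) (fun _ => (1:ℝ)) p q hp hq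
  simpa using h

lemma sum_c {n : ℕ} (hn : 2 ≤ n) :
    ∑ l : Fin (n+1), (if l.val + 3 ≤ n then (1:ℝ) else 0) = (n:ℝ) - 2 := by
  rw [Fin.sum_univ_eq_sum_range (fun k => if k + 3 ≤ n then (1:ℝ) else 0)]
  rw [← Finset.sum_subset (Finset.range_subset_range.mpr (show n - 2 ≤ n + 1 by omega))
      (fun k hk hk2 => by
        rw [if_neg]; simp only [Finset.mem_range] at hk hk2; omega)]
  rw [Finset.sum_congr rfl (fun k hk => if_pos (by simp only [Finset.mem_range] at hk; omega))]
  simp only [Finset.sum_const, Finset.card_range, nsmul_eq_mul, mul_one]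
  rw [Nat.cast_sub (by omega)]; norm_num

lemma ipDD {n : ℕ} (p q r s : ℕ) (hp : p ≤ n) (hq : q ≤ n) (hr : r ≤ n) (hs : s ≤ n) :
    wallIPB n (fun l => (if l.val = p then (1:ℝ) else 0) - (if l.val = q then 1 else 0), 0)
              (fun l => (if l.val = r then (1:ℝ) else 0) - (if l.val = s then 1 else 0), 0)
    = ((if p = r then (1:ℝ) else 0) - (if p = s then 1 else 0))
      - ((if q = r then (1:ℝ) else 0) - (if q = s then 1 else 0)) := by
  unfold wallIPB
  dsimp only
  rw [sum_sub_ind_mul (fun x => (if x = r then (1:ℝ) else 0) - (if x = s then 1 else 0)) p q hp hq,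
    sum_sub_ind p q hp hq, sum_sub_ind r s hr hs]
  ring

lemma ipDC {n : ℕ} (p q : ℕ) (hp : p ≤ n) (hq : q ≤ n) (b c : ℝ) :
    wallIPB n (fun l => (if l.val = p then (1:ℝ) else 0) - (if l.val = q then 1 else 0), b)
              (fun l => if l.val + 3 ≤ n then (1:ℝ) else 0, c)
    = ((if p + 3 ≤ n then (1:ℝ) else 0) - (if q + 3 ≤ n then 1 else 0)) + b * c := by
  unfold wallIPB
  dsimp only
  rw [sum_sub_ind_mul (fun x => if x + 3 ≤ n then (1:ℝ) else 0) p q hp hq,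
    sum_sub_ind p q hp hq]
  ring

lemma ipDE {n : ℕ} (p q : ℕ) (hp : p ≤ n) (hq : q ≤ n) (b c : ℝ) :
    wallIPB n (fun l => (if l.val = p then (1:ℝ) else 0) - (if l.val = q then 1 else 0), b)
              (fun l => if l.val = 0 then (1:ℝ) else 0, c)
    = ((if p = 0 then (1:ℝ) else 0) - (if q = 0 then 1 else 0)) + b * c := by
  unfold wallIPB
  dsimp only
  rw [sum_sub_ind_mul (fun x => if x = 0 then (1:ℝ) else 0) p q hp hq,
    sum_sub_ind p q hp hq]
  ring

lemma ipCC {n : ℕ} (hn : 4 ≤ n) (c : ℝ) (hc : c * c = 4 / n) :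
    wallIPB n (fun l => if l.val + 3 ≤ n then (1:ℝ) else 0, c)
              (fun l => if l.val + 3 ≤ n then (1:ℝ) else 0, c) = 2 := by
  have hn0 : (n:ℝ) ≠ 0 := Nat.cast_ne_zero.mpr (by omega)
  unfold wallIPB
  dsimp only
  rw [Finset.sum_congr rfl (fun l _ => show
      (if (l:Fin (n+1)).val + 3 ≤ n then (1:ℝ) else 0) * (if l.val + 3 ≤ n then (1:ℝ) else 0)
        = (if l.val + 3 ≤ n then (1:ℝ) else 0) from by split_ifs <;> norm_num)]
  rw [sum_c (by omega), hc]
  have hn4 : (4:ℝ) ≤ (n:ℝ) := by exact_mod_cast hn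
  field_simp
  ring

lemma ipCE {n : ℕ} (hn : 4 ≤ n) (c e : ℝ) (hce : c * e = -(2 / n)) :
    wallIPB n (fun l => if l.val + 3 ≤ n then (1:ℝ) else 0, c)
              (fun l => if l.val = 0 then (1:ℝ) else 0, e) = 0 := by
  have hn0 : (n:ℝ) ≠ 0 := Nat.cast_ne_zero.mpr (by omega)
  unfold wallIPB
  dsimp only
  have h1 : ∑ l : Fin (n+1), (if l.val + 3 ≤ n then (1:ℝ) else 0) * (if l.val = 0 then (1:ℝ) else 0)
      = 1 := by
    rw [Finset.sum_congr rfl (fun l _ => mul_comm _ _)]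
    have := sum_ind_mul (n:=n) (fun x => if x + 3 ≤ n then (1:ℝ) else 0) 0 (by omega)
    rw [this]
    show (if 0 + 3 ≤ n then (1:ℝ) else 0) = 1
    rw [if_pos (by omega)]
  rw [h1, sum_c (by omega), sum_ind 0 (by omega), hce]
  field_simp
  ring

lemma ipEE {n : ℕ} (hn : 4 ≤ n) (e : ℝ) (he : e * e = 1 / n) :
    wallIPB n (fun l => if l.val = 0 then (1:ℝ) else 0, e)
              (fun l => if l.val = 0 then (1:ℝ) else 0, e) = 1 := by
  have hn0 : (n:ℝ) ≠ 0 := Nat.cast_ne_zero.mpr (by omega)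
  unfold wallIPB
  dsimp only
  have h1 : ∑ l : Fin (n+1), (if l.val = 0 then (1:ℝ) else 0) * (if l.val = 0 then (1:ℝ) else 0)
      = 1 := by
    have := sum_ind_mul (n:=n) (fun x => if x = 0 then (1:ℝ) else 0) 0 (by omega)
    rw [this]
    show (if 0 = 0 then (1:ℝ) else 0) = 1
    rw [if_pos rfl]
  rw [h1, sum_ind 0 (by omega), he]
  field_simp
  ring

lemma wallIPB_comm {n : ℕ} (w w' : (Fin (n + 1) → ℝ) × ℝ) :
    wallIPB n w w' = wallIPB n w' w := by
  unfold wallIPB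
  rw [Finset.sum_congr rfl (fun i _ => mul_comm (w.1 i) (w'.1 i))]
  ring

/-- The generalized Cartan-matrix entry pattern of `Bₙ^∧∧` (unnormalized wall products). -/
noncomputable def chainB (n x y : ℕ) : ℝ :=
  if x = y then (if x = n+1 then (1:ℝ) else 2)
  else if (x = 0 ∧ y = 1) ∨ (y = 0 ∧ x = 1) then -1
  else if (x = 1 ∧ y = 3) ∨ (y = 1 ∧ x = 3) then -1
  else if (x + 1 = y ∨ y + 1 = x) ∧ 2 ≤ x ∧ 2 ≤ y ∧ x ≤ n ∧ y ≤ n then -1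
  else if (x = n ∧ y = n+1) ∨ (y = n ∧ x = n+1) then -1
  else 0

lemma chainB_symm (n x y : ℕ) : chainB n x y = chainB n y x := by
  unfold chainB
  refine if_ctx_congr eq_comm (fun h => by rw [h]) fun _ => ?_
  refine if_congr or_comm rfl ?_
  refine if_congr or_comm rfl ?_
  refine if_congr (by tauto) rfl ?_
  exact if_congr or_comm rfl rfl

lemma chainB_self (n x : ℕ) : chainB n x x = if x = n+1 then (1:ℝ) else 2 := by
  unfold chainB; rw [if_pos rfl]

lemma chainB_diag (n x y : ℕ) (h : x = y) (hE : ¬x = n+1) : chainB n x y = 2 := by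
  unfold chainB; rw [if_pos h, if_neg hE]

lemma chainB_diagE (n x y : ℕ) (h : x = y) (hE : x = n+1) : chainB n x y = 1 := by
  unfold chainB; rw [if_pos h, if_pos hE]

lemma chainB_m1 (n x y : ℕ) (h1 : ¬x = y)
    (h2 : (x = 0 ∧ y = 1) ∨ (y = 0 ∧ x = 1)) : chainB n x y = -1 := by
  unfold chainB; rw [if_neg h1, if_pos h2]

lemma chainB_m13 (n x y : ℕ) (h1 : ¬x = y)
    (h2 : ¬((x = 0 ∧ y = 1) ∨ (y = 0 ∧ x = 1)))
    (h3 : (x = 1 ∧ y = 3) ∨ (y = 1 ∧ x = 3)) : chainB n x y = -1 := by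
  unfold chainB; rw [if_neg h1, if_neg h2, if_pos h3]

lemma chainB_adj (n x y : ℕ) (h1 : ¬x = y)
    (h2 : ¬((x = 0 ∧ y = 1) ∨ (y = 0 ∧ x = 1)))
    (h3 : ¬((x = 1 ∧ y = 3) ∨ (y = 1 ∧ x = 3)))
    (h4 : (x + 1 = y ∨ y + 1 = x) ∧ 2 ≤ x ∧ 2 ≤ y ∧ x ≤ n ∧ y ≤ n) : chainB n x y = -1 := by
  unfold chainB; rw [if_neg h1, if_neg h2, if_neg h3, if_pos h4]

lemma chainB_mn (n x y : ℕ) (h1 : ¬x = y)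
    (h2 : ¬((x = 0 ∧ y = 1) ∨ (y = 0 ∧ x = 1)))
    (h3 : ¬((x = 1 ∧ y = 3) ∨ (y = 1 ∧ x = 3)))
    (h4 : ¬((x + 1 = y ∨ y + 1 = x) ∧ 2 ≤ x ∧ 2 ≤ y ∧ x ≤ n ∧ y ≤ n))
    (h5 : (x = n ∧ y = n+1) ∨ (y = n ∧ x = n+1)) : chainB n x y = -1 := by
  unfold chainB; rw [if_neg h1, if_neg h2, if_neg h3, if_neg h4, if_pos h5]

lemma chainB_zero (n x y : ℕ) (h1 : ¬x = y)
    (h2 : ¬((x = 0 ∧ y = 1) ∨ (y = 0 ∧ x = 1)))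
    (h3 : ¬((x = 1 ∧ y = 3) ∨ (y = 1 ∧ x = 3)))
    (h4 : ¬((x + 1 = y ∨ y + 1 = x) ∧ 2 ≤ x ∧ 2 ≤ y ∧ x ≤ n ∧ y ≤ n))
    (h5 : ¬((x = n ∧ y = n+1) ∨ (y = n ∧ x = n+1))) : chainB n x y = 0 := by
  unfold chainB; rw [if_neg h1, if_neg h2, if_neg h3, if_neg h4, if_neg h5]

lemma chainB_div (n x y : ℕ) (hn : 4 ≤ n) (hx : x < n+2) (hy : y < n+2) :
    2 * chainB n x y / (if x = n+1 then (1:ℝ) else 2) =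
      (if x = y then (2:ℝ)
       else if (x = 0 ∧ y = 1) ∨ (y = 0 ∧ x = 1) then -1
       else if (x = 1 ∧ y = 3) ∨ (y = 1 ∧ x = 3) then -1
       else if (x + 1 = y ∨ y + 1 = x) ∧ 2 ≤ x ∧ 2 ≤ y ∧ x ≤ n ∧ y ≤ n then -1
       else if x = n ∧ y = n + 1 then -1
       else if x = n + 1 ∧ y = n then -2
       else 0) := by
  unfold chainB
  by_cases h1 : x = y
  · simp only [if_pos h1]
    by_cases hE : x = n+1
    · rw [if_pos hE]; norm_num
    · rw [if_neg hE]; norm_num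
  · simp only [if_neg h1]
    by_cases h2 : (x = 0 ∧ y = 1) ∨ (y = 0 ∧ x = 1)
    · simp only [if_pos h2]; rw [if_neg (show ¬x = n+1 by omega)]; norm_num
    · simp only [if_neg h2]
      by_cases h3 : (x = 1 ∧ y = 3) ∨ (y = 1 ∧ x = 3)
      · simp only [if_pos h3]; rw [if_neg (show ¬x = n+1 by omega)]; norm_num
      · simp only [if_neg h3]
        by_cases h4 : (x + 1 = y ∨ y + 1 = x) ∧ 2 ≤ x ∧ 2 ≤ y ∧ x ≤ n ∧ y ≤ n
        · simp only [if_pos h4]; rw [if_neg (show ¬x = n+1 by omega)]; norm_num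
        · simp only [if_neg h4]
          by_cases h5 : (x = n ∧ y = n+1) ∨ (y = n ∧ x = n+1)
          · rw [if_pos h5]
            by_cases hE : x = n+1
            · rw [if_pos hE, if_neg (show ¬(x = n ∧ y = n + 1) by omega),
                if_pos (show x = n + 1 ∧ y = n by omega)]
              norm_num
            · rw [if_neg hE, if_pos (show x = n ∧ y = n + 1 by omega)]
              norm_num
          · rw [if_neg h5, if_neg (show ¬(x = n ∧ y = n + 1) by omega),
              if_neg (show ¬(x = n + 1 ∧ y = n) by omega)]
            by_cases hE : x = n+1
            · rw [if_pos hE]; norm_num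
            · rw [if_neg hE]; norm_num

set_option maxHeartbeats 1000000 in
/-- (Bₙ sequence.) For `n ≥ 4`, `d = n+1`, `a = √(8/n)`, the `n+2` dominant wall forms
(0-based index `m`, corresponding to the labels `−1, 0, 1, …, n`):
`w_{−1} = e_{n+1} − e_n`, `w₀ = e_n − e_{n−1}`, `w₁ = e₁ + … + e_{n−2} − (a√2/2)φ`,
`w_j = e_{n−j+1} − e_{n−j}` for `2 ≤ j ≤ n−1`, `w_n = e₁ + (a√2/4)φ`, have squared
norms `2` except `(w_n|w_n) = 1`, and their Cartan matrix is that of the overextension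
`Bₙ^∧∧`: `A_{ii} = 2`; `A_{−1,0} = A_{0,−1} = −1`; `A_{0,2} = A_{2,0} = −1`;
`A_{1,2} = A_{2,1} = −1`; `A_{j,j+1} = A_{j+1,j} = −1` for `2 ≤ j ≤ n−2`;
`A_{n−1,n} = −1`, `A_{n,n−1} = −2`; all other entries `0`.
(Here indices are shifted: label `i` ↦ `m = i+1`; `e_k` ↦ coordinate `k−1`.) -/
theorem Bn_billiard (n : ℕ) (hn : 4 ≤ n) (a : ℝ) (ha : a = Real.sqrt (8 / (n : ℝ)))
    (w : Fin (n + 2) → (Fin (n + 1) → ℝ) × ℝ)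
    (hw : ∀ m : Fin (n + 2), w m =
      if m.val = 0 then
        (fun l => (if l.val = n then (1 : ℝ) else 0) - (if l.val = n - 1 then 1 else 0),
          0)
      else if m.val = 1 then
        (fun l => (if l.val = n - 1 then (1 : ℝ) else 0)
          - (if l.val = n - 2 then 1 else 0), 0)
      else if m.val = 2 then
        (fun l => if l.val + 3 ≤ n then (1 : ℝ) else 0, -(a * Real.sqrt 2 / 2))
      else if m.val ≤ n then
        (fun l => (if l.val = n + 1 - m.val then (1 : ℝ) else 0)
          - (if l.val = n - m.val then 1 else 0), 0)
      else
        (fun l => if l.val = 0 then (1 : ℝ) else 0, a * Real.sqrt 2 / 4))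
    (A : Fin (n + 2) → Fin (n + 2) → ℝ)
    (hA : ∀ i j, A i j = 2 * wallIPB n (w i) (w j) / wallIPB n (w i) (w i)) :
    (∀ m : Fin (n + 2), wallIPB n (w m) (w m) = if m.val = n + 1 then 1 else 2) ∧
    (∀ i j : Fin (n + 2), A i j =
      if i = j then 2
      else if (i.val = 0 ∧ j.val = 1) ∨ (j.val = 0 ∧ i.val = 1) then -1
      else if (i.val = 1 ∧ j.val = 3) ∨ (j.val = 1 ∧ i.val = 3) then -1
      else if (i.val + 1 = j.val ∨ j.val + 1 = i.val)
          ∧ 2 ≤ i.val ∧ 2 ≤ j.val ∧ i.val ≤ n ∧ j.val ≤ n then -1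
      else if i.val = n ∧ j.val = n + 1 then -1
      else if i.val = n + 1 ∧ j.val = n then -2
      else 0) := by
  have hn0 : (n:ℝ) ≠ 0 := Nat.cast_ne_zero.mpr (by omega)
  have ha2 : a * a = 8 / n := by
    rw [ha]; exact Real.mul_self_sqrt (by positivity)
  have h2 : Real.sqrt 2 * Real.sqrt 2 = 2 := Real.mul_self_sqrt (by norm_num)
  have hcc : (-(a * Real.sqrt 2 / 2)) * (-(a * Real.sqrt 2 / 2)) = 4 / n := by
    have e : (-(a * Real.sqrt 2 / 2)) * (-(a * Real.sqrt 2 / 2))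
        = (a * a) * (Real.sqrt 2 * Real.sqrt 2) / 4 := by ring
    rw [e, ha2, h2]; field_simp; ring
  have hce : (-(a * Real.sqrt 2 / 2)) * (a * Real.sqrt 2 / 4) = -(2 / (n:ℝ)) := by
    have e : (-(a * Real.sqrt 2 / 2)) * (a * Real.sqrt 2 / 4)
        = -((a * a) * (Real.sqrt 2 * Real.sqrt 2) / 8) := by ring
    rw [e, ha2, h2]; field_simp
  have hee : (a * Real.sqrt 2 / 4) * (a * Real.sqrt 2 / 4) = 1 / (n:ℝ) := by
    have e : (a * Real.sqrt 2 / 4) * (a * Real.sqrt 2 / 4)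
        = (a * a) * (Real.sqrt 2 * Real.sqrt 2) / 16 := by ring
    rw [e, ha2, h2]; field_simp; ring
  -- wall extraction
  have hw2 : ∀ m : Fin (n+2), m.val = 2 →
      w m = (fun l => if l.val + 3 ≤ n then (1 : ℝ) else 0, -(a * Real.sqrt 2 / 2)) := by
    intro m hm
    rw [hw m, if_neg (by omega), if_neg (by omega), if_pos hm]
  have hwE : ∀ m : Fin (n+2), m.val = n + 1 →
      w m = (fun l => if l.val = 0 then (1 : ℝ) else 0, a * Real.sqrt 2 / 4) := by
    intro m hm
    rw [hw m, if_neg (by omega), if_neg (by omega), if_neg (by omega), if_neg (by omega)]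
  have hwD : ∀ m : Fin (n+2), ¬m.val = 2 → m.val ≤ n →
      w m = (fun l => (if l.val = n + 1 - (if m.val ≤ 1 then m.val + 1 else m.val)
          then (1 : ℝ) else 0)
        - (if l.val = n - (if m.val ≤ 1 then m.val + 1 else m.val) then 1 else 0), 0) := by
    intro m hm2 hmn
    by_cases hm0 : m.val = 0
    · rw [hw m, if_pos hm0]
      have e1 : n + 1 - (if m.val ≤ 1 then m.val + 1 else m.val) = n := by
        rw [hm0, if_pos (by norm_num : (0:ℕ) ≤ 1)]; omega
      have e2 : n - (if m.val ≤ 1 then m.val + 1 else m.val) = n - 1 := by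
        rw [hm0, if_pos (by norm_num : (0:ℕ) ≤ 1)]
      rw [e1, e2]
    · by_cases hm1 : m.val = 1
      · rw [hw m, if_neg hm0, if_pos hm1]
        have e1 : n + 1 - (if m.val ≤ 1 then m.val + 1 else m.val) = n - 1 := by
          rw [hm1, if_pos (by norm_num : (1:ℕ) ≤ 1)]; omega
        have e2 : n - (if m.val ≤ 1 then m.val + 1 else m.val) = n - 2 := by
          rw [hm1, if_pos (by norm_num : (1:ℕ) ≤ 1)]
        rw [e1, e2]
      · rw [hw m, if_neg hm0, if_neg hm1, if_neg hm2, if_pos hmn]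
        have e1 : n + 1 - (if m.val ≤ 1 then m.val + 1 else m.val) = n + 1 - m.val := by
          rw [if_neg (by omega)]
        have e2 : n - (if m.val ≤ 1 then m.val + 1 else m.val) = n - m.val := by
          rw [if_neg (by omega)]
        rw [e1, e2]
  -- the key computation
  have key : ∀ i j : Fin (n + 2), i.val ≤ j.val →
      wallIPB n (w i) (w j) = chainB n i.val j.val := by
    intro i j hij
    have hi := i.isLt
    have hj := j.isLt
    by_cases hj2 : j.val = 2
    · by_cases hi2 : i.val = 2
      · rw [hw2 i hi2, hw2 j hj2, ipCC hn _ hcc,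
          chainB_diag n i.val j.val (by omega) (by omega)]
      · -- i ∈ {0,1}, j = 2
        rw [hwD i hi2 (by omega), hw2 j hj2,
          ipDC _ _ (by split_ifs <;> omega) (by split_ifs <;> omega) _ _]
        have hi1 : i.val ≤ 1 := by omega
        simp only [if_pos hi1]
        rw [if_neg (show ¬(n + 1 - (i.val + 1) + 3 ≤ n) by omega),
          if_neg (show ¬(n - (i.val + 1) + 3 ≤ n) by omega),
          chainB_zero n i.val j.val (by omega) (by omega) (by omega) (by omega) (by omega)]
        norm_num
    · by_cases hjE : j.val = n + 1
      · by_cases hiE : i.val = n + 1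
        · rw [hwE i hiE, hwE j hjE, ipEE hn _ hee,
            chainB_diagE n i.val j.val (by omega) hiE]
        · by_cases hi2 : i.val = 2
          · rw [hw2 i hi2, hwE j hjE, ipCE hn _ _ hce,
              chainB_zero n i.val j.val (by omega) (by omega) (by omega) (by omega) (by omega)]
          · -- i D-type, j = E
            rw [hwD i hi2 (by omega), hwE j hjE,
              ipDE _ _ (by split_ifs <;> omega) (by split_ifs <;> omega) _ _]
            by_cases hi1 : i.val ≤ 1
            · simp only [if_pos hi1]
              rw [if_neg (show ¬(n + 1 - (i.val + 1) = 0) by omega),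
                if_neg (show ¬(n - (i.val + 1) = 0) by omega),
                chainB_zero n i.val j.val (by omega) (by omega) (by omega) (by omega)
                  (by omega)]
              norm_num
            · simp only [if_neg hi1]
              rw [if_neg (show ¬(n + 1 - i.val = 0) by omega)]
              by_cases hiN : i.val = n
              · rw [if_pos (show n - i.val = 0 by omega),
                  chainB_mn n i.val j.val (by omega) (by omega) (by omega) (by omega)
                    (by omega)]
                norm_num
              · rw [if_neg (show ¬(n - i.val = 0) by omega),
                  chainB_zero n i.val j.val (by omega) (by omega) (by omega) (by omega)
                    (by omega)]
                norm_num
      · -- j D-type (3 ≤ j ≤ n)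
        by_cases hi2 : i.val = 2
        · -- C·D
          rw [wallIPB_comm (w i) (w j), hw2 i hi2, hwD j hj2 (by omega),
            ipDC _ _ (by split_ifs <;> omega) (by split_ifs <;> omega) _ _]
          simp only [if_neg (show ¬(j.val ≤ 1) by omega)]
          by_cases h4 : 4 ≤ j.val
          · rw [if_pos (show n + 1 - j.val + 3 ≤ n by omega),
              if_pos (show n - j.val + 3 ≤ n by omega),
              chainB_zero n i.val j.val (by omega) (by omega) (by omega) (by omega)
                (by omega)]
            norm_num
          · rw [if_neg (show ¬(n + 1 - j.val + 3 ≤ n) by omega),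
              if_pos (show n - j.val + 3 ≤ n by omega),
              chainB_adj n i.val j.val (by omega) (by omega) (by omega) (by omega)]
            norm_num
        · -- D·D
          have hjn : j.val ≤ n := by omega
          have hin : i.val ≤ n := by omega
          rw [hwD i hi2 hin, hwD j hj2 hjn,
            ipDD _ _ _ _ (by split_ifs <;> omega) (by split_ifs <;> omega)
              (by split_ifs <;> omega) (by split_ifs <;> omega)]
          by_cases hi1 : i.val ≤ 1
          · simp only [if_pos hi1]
            by_cases hj1 : j.val ≤ 1
            · simp only [if_pos hj1]
              by_cases hEq : i.val = j.val
              · rw [if_pos (show n + 1 - (i.val + 1) = n + 1 - (j.val + 1) by omega),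
                  if_neg (show ¬(n + 1 - (i.val + 1) = n - (j.val + 1)) by omega),
                  if_neg (show ¬(n - (i.val + 1) = n + 1 - (j.val + 1)) by omega),
                  if_pos (show n - (i.val + 1) = n - (j.val + 1) by omega),
                  chainB_diag n i.val j.val hEq (by omega)]
                norm_num
              · -- i = 0, j = 1
                rw [if_neg (show ¬(n + 1 - (i.val + 1) = n + 1 - (j.val + 1)) by omega),
                  if_neg (show ¬(n + 1 - (i.val + 1) = n - (j.val + 1)) by omega),
                  if_pos (show n - (i.val + 1) = n + 1 - (j.val + 1) by omega),
                  if_neg (show ¬(n - (i.val + 1) = n - (j.val + 1)) by omega),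
                  chainB_m1 n i.val j.val hEq (by omega)]
                norm_num
            · simp only [if_neg hj1]
              by_cases hq : j.val = i.val + 2
              · rw [if_neg (show ¬(n + 1 - (i.val + 1) = n + 1 - j.val) by omega),
                  if_neg (show ¬(n + 1 - (i.val + 1) = n - j.val) by omega),
                  if_pos (show n - (i.val + 1) = n + 1 - j.val by omega),
                  if_neg (show ¬(n - (i.val + 1) = n - j.val) by omega),
                  chainB_m13 n i.val j.val (by omega) (by omega) (by omega)]
                norm_num
              · rw [if_neg (show ¬(n + 1 - (i.val + 1) = n + 1 - j.val) by omega),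
                  if_neg (show ¬(n + 1 - (i.val + 1) = n - j.val) by omega),
                  if_neg (show ¬(n - (i.val + 1) = n + 1 - j.val) by omega),
                  if_neg (show ¬(n - (i.val + 1) = n - j.val) by omega),
                  chainB_zero n i.val j.val (by omega) (by omega) (by omega) (by omega)
                    (by omega)]
                norm_num
          · simp only [if_neg hi1]
            by_cases hj1 : j.val ≤ 1
            · exfalso; omega
            · simp only [if_neg hj1]
              by_cases hEq : i.val = j.val
              · rw [if_pos (show n + 1 - i.val = n + 1 - j.val by omega),
                  if_neg (show ¬(n + 1 - i.val = n - j.val) by omega),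
                  if_neg (show ¬(n - i.val = n + 1 - j.val) by omega),
                  if_pos (show n - i.val = n - j.val by omega),
                  chainB_diag n i.val j.val hEq (by omega)]
                norm_num
              · by_cases hAdj : j.val = i.val + 1
                · rw [if_neg (show ¬(n + 1 - i.val = n + 1 - j.val) by omega),
                    if_neg (show ¬(n + 1 - i.val = n - j.val) by omega),
                    if_pos (show n - i.val = n + 1 - j.val by omega),
                    if_neg (show ¬(n - i.val = n - j.val) by omega),
                    chainB_adj n i.val j.val hEq (by omega) (by omega) (by omega)]
                  norm_num
                · rw [if_neg (show ¬(n + 1 - i.val = n + 1 - j.val) by omega),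
                    if_neg (show ¬(n + 1 - i.val = n - j.val) by omega),
                    if_neg (show ¬(n - i.val = n + 1 - j.val) by omega),
                    if_neg (show ¬(n - i.val = n - j.val) by omega),
                    chainB_zero n i.val j.val hEq (by omega) (by omega) (by omega)
                      (by omega)]
                  norm_num
  have keyAll : ∀ i j : Fin (n + 2), wallIPB n (w i) (w j) = chainB n i.val j.val := by
    intro i j
    rcases le_total i.val j.val with h | h
    · exact key i j h
    · rw [wallIPB_comm, key j i h]
      exact chainB_symm n _ _
  constructor
  · intro m
    rw [keyAll m m, chainB_self]
  · intro i j
    rw [hA i j, keyAll i j, keyAll i i, chainB_self]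
    simp only [Fin.ext_iff]
    exact chainB_div n i.val j.val hn i.isLt j.isLt
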